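/- Let Θ₁ be symmetric positive definite and Γ symmetric with ‖Γ‖₂·‖Θ₁⁻¹‖₂ < 1. Then A := vec(Γ)ᵀ (∫₀¹ (1−v)(Θ₁+vΓ)⁻¹ ⊗ (Θ₁+vΓ)⁻¹ dv) vec(Γ) satisfies A ≤ ‖Γ‖_F² · ‖Θ₁⁻¹‖₂² / (2·(1 − ‖Θ₁⁻¹‖₂·‖Γ‖₂)²). -/

import Mathlib

open Matrix Kronecker

noncomputable def frobNorm {p q : ℕ} (M : Matrix (Fin p) (Fin q) ℝ) : ℝ :=
  Real.sqrt (∑ i, ∑ j, (M i j)^2)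

noncomputable def opNorm {p q : ℕ} (M : Matrix (Fin p) (Fin q) ℝ) : ℝ :=
  ‖(Matrix.toEuclideanLin M).toContinuousLinearMap‖

/-- `A = vec(Γ)ᵀ (∫₀¹ (1−v)(Θ₁+vΓ)⁻¹ ⊗ (Θ₁+vΓ)⁻¹ dv) vec(Γ)`, with the
integral pulled to the scalar level. -/
noncomputable def kronQuadForm {p : ℕ} (Θ₁ Γ : Matrix (Fin p) (Fin p) ℝ) : ℝ :=
  ∫ v in (0:ℝ)..1, (1 - v) *
    ((fun ij : Fin p × Fin p => Γ ij.1 ij.2) ⬝ᵥ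
      (((Θ₁ + v • Γ)⁻¹ ⊗ₖ (Θ₁ + v • Γ)⁻¹).mulVec
        fun ij : Fin p × Fin p => Γ ij.1 ij.2))

namespace Stmt13Aux
variable {n : Type*} [Fintype n] [DecidableEq n]

noncomputable def cn (M : Matrix n n ℝ) : ℝ := ‖Matrix.toEuclideanCLM (𝕜 := ℝ) M‖

lemma cn_nonneg (M : Matrix n n ℝ) : 0 ≤ cn M := norm_nonneg _

lemma cn_mul_le (A B : Matrix n n ℝ) : cn (A * B) ≤ cn A * cn B := by
  unfold cn; rw [_root_.map_mul]; exact norm_mul_le _ _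

lemma mulVec_sq_le (M : Matrix n n ℝ) (y : n → ℝ) :
    Real.sqrt (∑ i, (M.mulVec y i)^2) ≤ cn M * Real.sqrt (∑ i, y i ^2) := by
  have h := (Matrix.toEuclideanCLM (𝕜 := ℝ) M).le_opNorm ((WithLp.equiv 2 (n → ℝ)).symm y)
  rw [WithLp.equiv_symm_apply, Matrix.toEuclideanCLM_toLp, EuclideanSpace.norm_eq, EuclideanSpace.norm_eq] at h
  simp only [Real.norm_eq_abs, sq_abs, Matrix.toLin'_apply] at h
  exact h

lemma sum_sq_mulVec_le (M : Matrix n n ℝ) (y : n → ℝ) :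
    ∑ i, (M.mulVec y i)^2 ≤ cn M ^ 2 * ∑ i, y i ^2 := by
  have h0 : (0:ℝ) ≤ ∑ i, (M.mulVec y i)^2 := Finset.sum_nonneg fun _ _ => sq_nonneg _
  have h1 : (0:ℝ) ≤ ∑ i, y i ^2 := Finset.sum_nonneg fun _ _ => sq_nonneg _
  have h2 := pow_le_pow_left₀ (Real.sqrt_nonneg _) (mulVec_sq_le M y) 2
  rwa [Real.sq_sqrt h0, mul_pow, Real.sq_sqrt h1] at h2

lemma frob_mul_left (A B : Matrix n n ℝ) :
    ∑ i, ∑ j, ((A*B) i j)^2 ≤ cn A ^ 2 * ∑ i, ∑ j, (B i j)^2 := by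
  calc ∑ i, ∑ j, ((A*B) i j)^2
      = ∑ j, ∑ i, (A.mulVec (fun k => B k j) i)^2 := by
        rw [Finset.sum_comm]
        simp [Matrix.mul_apply, Matrix.mulVec, dotProduct]
    _ ≤ ∑ j : n, (cn A ^ 2 * ∑ i, (B i j)^2) :=
        Finset.sum_le_sum fun j _ => sum_sq_mulVec_le A _
    _ = cn A ^ 2 * ∑ i, ∑ j, (B i j)^2 := by rw [← Finset.mul_sum, Finset.sum_comm]

lemma frob_mul_right (A B : Matrix n n ℝ) :
    ∑ i, ∑ j, ((A*B) i j)^2 ≤ cn Bᵀ ^ 2 * ∑ i, ∑ j, (A i j)^2 := by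
  have h := frob_mul_left Bᵀ Aᵀ
  calc ∑ i, ∑ j, ((A*B) i j)^2 = ∑ i, ∑ j, ((Bᵀ*Aᵀ) i j)^2 := by
        rw [Finset.sum_comm]
        apply Finset.sum_congr rfl; intro j _; apply Finset.sum_congr rfl; intro i _
        congr 1
        simp [Matrix.mul_apply, Matrix.transpose_apply, mul_comm]
    _ ≤ cn Bᵀ ^ 2 * ∑ i, ∑ j, (Aᵀ i j)^2 := h
    _ = cn Bᵀ ^ 2 * ∑ i, ∑ j, (A i j)^2 := by
        congr 1
        rw [Finset.sum_comm]
        simp [Matrix.transpose_apply]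

lemma quad_le (B : Matrix n n ℝ) (hB : Bᵀ = B) (x : n × n → ℝ) :
    x ⬝ᵥ ((B ⊗ₖ B).mulVec x) ≤ cn B ^ 2 * ∑ ij : n × n, x ij ^2 := by
  set X : Matrix n n ℝ := fun i j => x (i, j) with hX
  have key : ∀ i j, ((B ⊗ₖ B).mulVec x) (i, j) = (B * X * B) i j := by
    intro i j
    simp only [Matrix.mulVec, dotProduct, Fintype.sum_prod_type, Matrix.mul_apply,
      Matrix.kroneckerMap_apply, Finset.sum_mul, Finset.mul_sum]
    rw [Finset.sum_comm]
    apply Finset.sum_congr rfl; intro k _; apply Finset.sum_congr rfl; intro l _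
    have hBs : B k j = B j k := (congrFun (congrFun hB k) j).symm
    rw [hBs]; ring
  have hdot : x ⬝ᵥ ((B ⊗ₖ B).mulVec x) = ∑ i, ∑ j, X i j * (B * X * B) i j := by
    simp only [dotProduct, Fintype.sum_prod_type]
    apply Finset.sum_congr rfl; intro i _; apply Finset.sum_congr rfl; intro j _
    rw [key i j]
  have hS0 : (0:ℝ) ≤ ∑ i, ∑ j, (X i j)^2 := by positivity
  have hcs := Finset.sum_mul_sq_le_sq_mul_sq Finset.univ
      (fun ij : n × n => x ij) (fun ij : n × n => (B * X * B) ij.1 ij.2)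
  have hm : ∑ i, ∑ j, ((B * X * B) i j)^2 ≤ cn B ^2 * (cn B ^2 * ∑ i, ∑ j, (X i j)^2) := by
    calc ∑ i, ∑ j, ((B * X * B) i j)^2
        = ∑ i, ∑ j, ((B * (X * B)) i j)^2 := by rw [Matrix.mul_assoc]
      _ ≤ cn B ^2 * ∑ i, ∑ j, ((X * B) i j)^2 := frob_mul_left _ _
      _ ≤ cn B ^2 * (cn Bᵀ ^2 * ∑ i, ∑ j, (X i j)^2) := by
          apply mul_le_mul_of_nonneg_left (frob_mul_right _ _) (by positivity)
      _ = cn B ^2 * (cn B ^2 * ∑ i, ∑ j, (X i j)^2) := by rw [hB]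
  have hsq : (x ⬝ᵥ ((B ⊗ₖ B).mulVec x))^2 ≤ (cn B ^2 * ∑ i, ∑ j, (X i j)^2)^2 := by
    rw [hdot]
    have h1 : (∑ i, ∑ j, X i j * (B * X * B) i j)^2
        ≤ (∑ ij : n × n, x ij ^2) * ∑ i, ∑ j, ((B * X * B) i j)^2 := by
      have := hcs
      simp only [Fintype.sum_prod_type] at this ⊢
      convert this using 2 <;> simp [hX]
    have h2 : (∑ ij : n × n, x ij ^2) = ∑ i, ∑ j, (X i j)^2 := by
      simp [Fintype.sum_prod_type, hX]
    calc (∑ i, ∑ j, X i j * (B * X * B) i j)^2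
        ≤ (∑ ij : n × n, x ij ^2) * ∑ i, ∑ j, ((B * X * B) i j)^2 := h1
      _ = (∑ i, ∑ j, (X i j)^2) * ∑ i, ∑ j, ((B * X * B) i j)^2 := by rw [h2]
      _ ≤ (∑ i, ∑ j, (X i j)^2) * (cn B ^2 * (cn B ^2 * ∑ i, ∑ j, (X i j)^2)) :=
          mul_le_mul_of_nonneg_left hm hS0
      _ = (cn B ^2 * ∑ i, ∑ j, (X i j)^2)^2 := by ring
  have hrhs : (0:ℝ) ≤ cn B ^2 * ∑ i, ∑ j, (X i j)^2 := by positivity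
  have habs : x ⬝ᵥ ((B ⊗ₖ B).mulVec x) ≤ cn B ^2 * ∑ i, ∑ j, (X i j)^2 := by
    nlinarith [hsq, hrhs]
  calc x ⬝ᵥ ((B ⊗ₖ B).mulVec x) ≤ cn B ^2 * ∑ i, ∑ j, (X i j)^2 := habs
    _ = cn B ^2 * ∑ ij : n × n, x ij ^2 := by
        congr 1; simp [Fintype.sum_prod_type, hX]

lemma inv_one_add (M : Matrix n n ℝ) (h : ‖Matrix.toEuclideanCLM (𝕜 := ℝ) M‖ < 1) :
    IsUnit (1 + M) ∧ cn ((1 + M)⁻¹) ≤ (1 - ‖Matrix.toEuclideanCLM (𝕜 := ℝ) M‖)⁻¹ := by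
  set ψ := Matrix.toEuclideanCLM (𝕜 := ℝ) (n := n) with hψ
  set T := ψ M with hT
  have h' : ‖-T‖ < 1 := by rwa [norm_neg]
  set u : (EuclideanSpace ℝ n →L[ℝ] EuclideanSpace ℝ n)ˣ := Units.oneSub (-T) h' with hu
  have huval : (u : EuclideanSpace ℝ n →L[ℝ] EuclideanSpace ℝ n) = ψ (1 + M) := by
    rw [hu, Units.val_oneSub, sub_neg_eq_add, map_add, _root_.map_one ψ]
  set Minv : Matrix n n ℝ := ψ.symm ↑u⁻¹ with hMinv
  have h1 : (1 + M) * Minv = 1 := by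
    apply ψ.injective
    show ψ ((1 + M) * Minv) = ψ 1
    rw [_root_.map_mul ψ _ _, _root_.map_one ψ, hMinv, ψ.apply_symm_apply, ← huval, u.mul_inv]
  have h2 : Minv * (1 + M) = 1 := by
    apply ψ.injective
    show ψ (Minv * (1 + M)) = ψ 1
    rw [_root_.map_mul ψ _ _, _root_.map_one ψ, hMinv, ψ.apply_symm_apply, ← huval, u.inv_mul]
  refine ⟨⟨⟨1 + M, Minv, h1, h2⟩, rfl⟩, ?_⟩
  have hinv : (1 + M)⁻¹ = Minv := Matrix.inv_eq_right_inv h1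
  have hcn : cn ((1 + M)⁻¹) = ‖(↑u⁻¹ : EuclideanSpace ℝ n →L[ℝ] EuclideanSpace ℝ n)‖ := by
    rw [hinv]; unfold cn; rw [hMinv, ψ.apply_symm_apply]
  have hgeo : (↑u⁻¹ : EuclideanSpace ℝ n →L[ℝ] EuclideanSpace ℝ n) = ∑' k : ℕ, (-T)^k := rfl
  have hbound := tsum_geometric_le_of_norm_lt_one (-T) h'
  have hone : ‖(1 : EuclideanSpace ℝ n →L[ℝ] EuclideanSpace ℝ n)‖ ≤ 1 := by
    rw [ContinuousLinearMap.one_def]; exact ContinuousLinearMap.norm_id_le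
  rw [hcn, hgeo]
  rw [norm_neg] at hbound
  linarith

end Stmt13Aux

open Stmt13Aux

lemma opNorm_eq_cn {p : ℕ} (M : Matrix (Fin p) (Fin p) ℝ) : opNorm M = cn M := by
  unfold opNorm cn
  congr 1

set_option maxHeartbeats 1000000 in
/-- Upper bound for the log-det Taylor remainder:
`A ≤ ‖Γ‖_F² ‖Θ₁⁻¹‖₂² / (2 (1 − ‖Θ₁⁻¹‖₂ ‖Γ‖₂)²)`. -/
theorem stmt13 {p : ℕ} (Θ₁ Γ : Matrix (Fin p) (Fin p) ℝ)
    (h₁ : Θ₁.PosDef) (hΓ : Γ.IsHermitian)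
    (hsmall : opNorm Γ * opNorm Θ₁⁻¹ < 1) :
    kronQuadForm Θ₁ Γ ≤
      frobNorm Γ ^ 2 * opNorm Θ₁⁻¹ ^ 2 /
        (2 * (1 - opNorm Θ₁⁻¹ * opNorm Γ) ^ 2) := by
  have hsymmΘ : Θ₁ᵀ = Θ₁ := h₁.isHermitian.eq
  have hsymmΓ : Γᵀ = Γ := hΓ.eq
  have hdet : IsUnit Θ₁.det := h₁.det_pos.ne'.isUnit
  have hΘmul : Θ₁ * Θ₁⁻¹ = 1 := Matrix.mul_nonsing_inv _ hdet
  set q : ℝ := opNorm Θ₁⁻¹ * opNorm Γ with hqdef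
  have hq0 : 0 ≤ q := mul_nonneg (norm_nonneg _) (norm_nonneg _)
  have hq1 : q < 1 := by rw [hqdef, mul_comm]; exact hsmall
  have h1q : 0 < 1 - q := by linarith
  set S : ℝ := ∑ i, ∑ j, (Γ i j)^2 with hSdef
  have hS0 : 0 ≤ S := by positivity
  set C : ℝ := (opNorm Θ₁⁻¹ / (1-q))^2 * S with hCdef
  have hC0 : 0 ≤ C := by positivity
  -- the integrand
  set f : ℝ → ℝ := fun v => (1 - v) *
    ((fun ij : Fin p × Fin p => Γ ij.1 ij.2) ⬝ᵥ
      (((Θ₁ + v • Γ)⁻¹ ⊗ₖ (Θ₁ + v • Γ)⁻¹).mulVec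
        fun ij : Fin p × Fin p => Γ ij.1 ij.2)) with hfdef
  have hkq : kronQuadForm Θ₁ Γ = ∫ v in (0:ℝ)..1, f v := rfl
  -- pointwise bound
  have hpt : ∀ v ∈ Set.Icc (0:ℝ) 1, f v ≤ (1 - v) * C := by
    intro v hv
    obtain ⟨hv0, hv1⟩ := hv
    set K : Matrix (Fin p) (Fin p) ℝ := v • (Θ₁⁻¹ * Γ) with hKdef
    have hKnorm : ‖Matrix.toEuclideanCLM (𝕜 := ℝ) K‖ ≤ v * q := by
      rw [hKdef, _root_.map_smul (Matrix.toEuclideanCLM (𝕜 := ℝ)) v (Θ₁⁻¹ * Γ), norm_smul, Real.norm_eq_abs, abs_of_nonneg hv0]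
      apply mul_le_mul_of_nonneg_left _ hv0
      calc ‖Matrix.toEuclideanCLM (𝕜 := ℝ) (Θ₁⁻¹ * Γ)‖ = cn (Θ₁⁻¹ * Γ) := rfl
        _ ≤ cn Θ₁⁻¹ * cn Γ := cn_mul_le _ _
        _ = q := by rw [hqdef, opNorm_eq_cn, opNorm_eq_cn]
    have hKlt : ‖Matrix.toEuclideanCLM (𝕜 := ℝ) K‖ < 1 := by
      calc ‖Matrix.toEuclideanCLM (𝕜 := ℝ) K‖ ≤ v * q := hKnorm
        _ ≤ 1 * q := mul_le_mul_of_nonneg_right hv1 hq0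
        _ = q := one_mul q
        _ < 1 := hq1
    obtain ⟨hKunit, hKinv⟩ := inv_one_add K hKlt
    have decomp : Θ₁ + v • Γ = Θ₁ * (1 + K) := by
      rw [Matrix.mul_add, Matrix.mul_one, hKdef, Matrix.mul_smul, ← Matrix.mul_assoc,
        hΘmul, Matrix.one_mul]
    have hBeq : (Θ₁ + v • Γ)⁻¹ = (1 + K)⁻¹ * Θ₁⁻¹ := by
      rw [decomp, Matrix.mul_inv_rev]
    have hcnB : cn ((Θ₁ + v • Γ)⁻¹) ≤ opNorm Θ₁⁻¹ / (1 - q) := by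
      calc cn ((Θ₁ + v • Γ)⁻¹) = cn ((1 + K)⁻¹ * Θ₁⁻¹) := by rw [hBeq]
        _ ≤ cn ((1 + K)⁻¹) * cn Θ₁⁻¹ := cn_mul_le _ _
        _ ≤ (1 - ‖Matrix.toEuclideanCLM (𝕜 := ℝ) K‖)⁻¹ * cn Θ₁⁻¹ :=
            mul_le_mul_of_nonneg_right hKinv (cn_nonneg _)
        _ ≤ (1 - q)⁻¹ * cn Θ₁⁻¹ := by
            apply mul_le_mul_of_nonneg_right _ (cn_nonneg _)
            apply inv_anti₀ h1q
            have : v * q ≤ q := by nlinarith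
            linarith [hKnorm]
        _ = opNorm Θ₁⁻¹ / (1 - q) := by rw [opNorm_eq_cn, div_eq_inv_mul]
    have hsymmB : ((Θ₁ + v • Γ)⁻¹)ᵀ = (Θ₁ + v • Γ)⁻¹ := by
      rw [Matrix.transpose_nonsing_inv, Matrix.transpose_add, Matrix.transpose_smul,
        hsymmΘ, hsymmΓ]
    have hquad := quad_le ((Θ₁ + v • Γ)⁻¹) hsymmB (fun ij : Fin p × Fin p => Γ ij.1 ij.2)
    have hsum : ∑ ij : Fin p × Fin p, (Γ ij.1 ij.2)^2 = S := by
      rw [hSdef]; exact Fintype.sum_prod_type _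
    have hquad2 : ((fun ij : Fin p × Fin p => Γ ij.1 ij.2) ⬝ᵥ
        (((Θ₁ + v • Γ)⁻¹ ⊗ₖ (Θ₁ + v • Γ)⁻¹).mulVec
          fun ij : Fin p × Fin p => Γ ij.1 ij.2)) ≤ C := by
      calc ((fun ij : Fin p × Fin p => Γ ij.1 ij.2) ⬝ᵥ
          (((Θ₁ + v • Γ)⁻¹ ⊗ₖ (Θ₁ + v • Γ)⁻¹).mulVec
            fun ij : Fin p × Fin p => Γ ij.1 ij.2))
          ≤ cn ((Θ₁ + v • Γ)⁻¹) ^ 2 * ∑ ij : Fin p × Fin p, (Γ ij.1 ij.2)^2 := hquad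
        _ ≤ (opNorm Θ₁⁻¹ / (1 - q))^2 * S := by
            rw [hsum]
            apply mul_le_mul_of_nonneg_right _ hS0
            exact pow_le_pow_left₀ (cn_nonneg _) hcnB 2
        _ = C := hCdef.symm
    rw [hfdef]
    exact mul_le_mul_of_nonneg_left hquad2 (by linarith)
  rw [hkq]
  have hRHS : frobNorm Γ ^ 2 * opNorm Θ₁⁻¹ ^ 2 / (2 * (1 - opNorm Θ₁⁻¹ * opNorm Γ) ^ 2)
      = (1/2) * C := by
    rw [hCdef, frobNorm, Real.sq_sqrt (by positivity), ← hSdef, div_pow, ← hqdef]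
    field_simp
  rw [hRHS]
  by_cases hint : IntervalIntegrable f MeasureTheory.volume 0 1
  · have hg : IntervalIntegrable (fun v => (1 - v) * C) MeasureTheory.volume 0 1 :=
      (((continuous_const.sub continuous_id).mul continuous_const).intervalIntegrable _ _)
    have hmono := intervalIntegral.integral_mono_on zero_le_one hint hg hpt
    have hgval : (∫ v in (0:ℝ)..1, (1 - v) * C) = (1/2) * C := by
      rw [intervalIntegral.integral_mul_const]
      have e1 : (∫ v in (0:ℝ)..1, (1 - v)) = 1/2 := by
        have hid : IntervalIntegrable (fun v : ℝ => v) MeasureTheory.volume 0 1 := by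
          apply Continuous.intervalIntegrable
          exact continuous_id
        rw [intervalIntegral.integral_sub intervalIntegrable_const hid, integral_id,
          intervalIntegral.integral_const]
        norm_num
      rw [e1]
    calc (∫ v in (0:ℝ)..1, f v) ≤ ∫ v in (0:ℝ)..1, (1 - v) * C := hmono
      _ = (1/2) * C := hgval
  · rw [intervalIntegral.integral_undef hint]
    positivity
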